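/- Let R_{0,[3]} be the polynomial ring over ℚ, with variables ℝE_{J,K} for {J,K}∈P([3]) and ℝD_{I;J,K} for (I,{J,K})∈P̃•([3]), and I_{0,[3]} ⊂ R_{0,[3]} the corresponding ideal. Then the quotient ℚ-algebra R_{0,[3]}/I_{0,[3]} is isomorphic to ℚ[x₁,x₂,x₃,y₁,y₂,y₃]/I, where I is the ideal generated by the elements x_i·x_j for all i,j∈{1,2,3}, y_i·y_j for all i,j∈{1,2,3}, x_i·y_j for all i,j∈{1,2,3} with i≠j, and the elements x₁y₁−x₂y₂ and x₁y₁−x₃y₃, via an isomorphism sending the classes of ℝE_{{1},{2,3}}, ℝE_{{2},{1,3}}, ℝE_{{3},{1,2}}, ℝD_{{1};{2,3},∅}, ℝD_{{2};{1,3},∅}, ℝD_{{3};{1,2},∅} to the classes of x₁, x₂, x₃, y₁, y₂, y₃ respectively. -/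
import Mathlib


open MvPolynomial Finset TensorProduct

noncomputable section

/-- `[ℓ] = {1, …, ℓ}`. -/
abbrev Iset (n : ℕ) : Finset ℕ := Finset.Icc 1 n

/-! ### The "complex" rings `R_S = R[(D_{J,K})_{{J,K} ∈ P•(S)}]`.
An unordered pair `{J,K}` with `J ⊔ K = S` and `2 ≤ |J| ≤ |S|-2` is represented by
its unique member containing `min S`. -/

/-- Index type for the variables `D_{J,K}`, `{J,K} ∈ P•(S)`: the canonical member
of the pair is the one whose minimum is `min S`. -/
abbrev CxIdx (S : Finset ℕ) : Type :=
  {J : Finset ℕ // J ⊆ S ∧ 2 ≤ J.card ∧ 2 ≤ (S \ J).card ∧ J.min = S.min}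

/-- The polynomial ring `R_S` on the variables `D_{J,K}`, `{J,K} ∈ P•(S)`. -/
abbrev CxRing (R : Type) [CommRing R] (S : Finset ℕ) : Type := MvPolynomial (CxIdx S) R

def cxXv (R : Type) [CommRing R] (S J : Finset ℕ) : CxRing R S :=
  if h : J ⊆ S ∧ 2 ≤ J.card ∧ 2 ≤ (S \ J).card ∧ J.min = S.min then X ⟨J, h⟩ else 0

/-- The variable `D_{J,K}` of `R_S` (equal to `0` if `{J,K} ∉ P•(S)`). -/
def cxD (R : Type) [CommRing R] (S J K : Finset ℕ) : CxRing R S :=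
  if Disjoint J K ∧ J ∪ K = S then (if J.min ≤ K.min then cxXv R S J else cxXv R S K)
  else 0

/-- `{J,K} ⋂̸ {J',K'}`:  `J ⊄ J'`, `J ⊄ K'`, `J' ⊄ J` and `K' ⊄ J`. -/
abbrev NcapCx (J J' K' : Finset ℕ) : Prop :=
  ¬ J ⊆ J' ∧ ¬ J ⊆ K' ∧ ¬ J' ⊆ J ∧ ¬ K' ⊆ J

/-- The element `R^S_{abcd}`. -/
def cxRel (R : Type) [CommRing R] (S : Finset ℕ) (a b c d : ℕ) : CxRing R S :=
  (∑ J ∈ S.powerset,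
    if 2 ≤ J.card ∧ 2 ≤ (S \ J).card ∧ a ∈ J ∧ b ∈ J ∧ c ∈ S \ J ∧ d ∈ S \ J
    then cxD R S J (S \ J) else 0)
  - ∑ J ∈ S.powerset,
    if 2 ≤ J.card ∧ 2 ≤ (S \ J).card ∧ a ∈ J ∧ c ∈ J ∧ b ∈ S \ J ∧ d ∈ S \ J
    then cxD R S J (S \ J) else 0

/-- The ideal `I_S ⊂ R_S`. -/
def cxIdeal (R : Type) [CommRing R] (S : Finset ℕ) : Ideal (CxRing R S) :=
  Ideal.span (
    {x | ∃ J K J' K' : Finset ℕ,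
      (Disjoint J K ∧ J ∪ K = S ∧ 2 ≤ J.card ∧ 2 ≤ K.card) ∧
      (Disjoint J' K' ∧ J' ∪ K' = S ∧ 2 ≤ J'.card ∧ 2 ≤ K'.card) ∧
      NcapCx J J' K' ∧ x = cxD R S J K * cxD R S J' K'} ∪
    {x | ∃ a b c d : ℕ, a ∈ S ∧ b ∈ S ∧ c ∈ S ∧ d ∈ S ∧ a ≠ b ∧ c ≠ d ∧
      x = cxRel R S a b c d})

/-- The homomorphism `F : R_{[ℓ]} → R_{[ℓ+1]}`, `D_{J,K} ↦ D_{J∪{ℓ+1},K} + D_{J,K∪{ℓ+1}}`. -/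
def Fcx (R : Type) [CommRing R] (ℓ : ℕ) : CxRing R (Iset ℓ) →ₐ[R] CxRing R (Iset (ℓ + 1)) :=
  aeval fun i =>
    cxD R (Iset (ℓ + 1)) (i.1 ∪ {ℓ + 1}) (Iset ℓ \ i.1)
    + cxD R (Iset (ℓ + 1)) i.1 ((Iset ℓ \ i.1) ∪ {ℓ + 1})

/-- The homomorphism `F_P : R_{{nd}⊔B} → R_{[ℓ]}`, `D_{J',K'} ↦ D_{P∪(J'-{nd}),K'}` for
`nd ∈ J'`; here `nd = 0`. -/
def FJcx (R : Type) [CommRing R] (ℓ : ℕ) (P B : Finset ℕ) :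
    CxRing R (insert 0 B) →ₐ[R] CxRing R (Iset ℓ) :=
  aeval fun i => cxD R (Iset ℓ) (P ∪ i.1.erase 0) (insert 0 B \ i.1)

/-- The homomorphism `F_{J,K} : R_{{nd}⊔J} ⊗ R_{{nd}⊔K} → R_{[ℓ]}` acting by `F_K` on the
first factor and by `F_J` on the second. -/
def FJKcx (R : Type) [CommRing R] (ℓ : ℕ) (J K : Finset ℕ) :
    TensorProduct R (CxRing R (insert 0 J)) (CxRing R (insert 0 K)) →ₐ[R] CxRing R (Iset ℓ) :=
  Algebra.TensorProduct.productMap (FJcx R ℓ K J) (FJcx R ℓ J K)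

/-- The submodule `A ⊗ I_B + I_A ⊗ B` of `A ⊗_R B`. -/
def mixedSub (R : Type) [CommRing R] {A B : Type} [CommRing A] [CommRing B]
    [Algebra R A] [Algebra R B] (IA : Ideal A) (IB : Ideal B) :
    Submodule R (TensorProduct R A B) :=
  Submodule.span R
    ({x | ∃ p q, q ∈ IB ∧ x = p ⊗ₜ[R] q} ∪ {x | ∃ p q, p ∈ IA ∧ x = p ⊗ₜ[R] q})

/-! ### The "real" rings `R_{0,S}` with variables `ℝE_{J,K}`, `{J,K} ∈ P(S)`, and
`ℝD_{I;J,K}`, `(I,{J,K}) ∈ P̃•(S)`.  The unordered pair `{J,K}` is represented by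
its member whose minimum equals the minimum of `J ∪ K`. -/

abbrev EIdx (S : Finset ℕ) : Type := {J : Finset ℕ // J ⊆ S ∧ J.min = S.min}

abbrev DIdx (S : Finset ℕ) : Type :=
  {p : Finset ℕ × Finset ℕ //
    p.1 ⊆ S ∧ p.2 ⊆ S \ p.1 ∧ 1 ≤ p.1.card ∧ 2 ≤ (S \ p.1).card ∧ p.2.min = (S \ p.1).min}

/-- The polynomial ring `R_{0,S}`. -/
abbrev RRing (R : Type) [CommRing R] (S : Finset ℕ) : Type :=
  MvPolynomial (EIdx S ⊕ DIdx S) R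

def reXe (R : Type) [CommRing R] (S J : Finset ℕ) : RRing R S :=
  if h : J ⊆ S ∧ J.min = S.min then X (Sum.inl ⟨J, h⟩) else 0

/-- The variable `ℝE_{J,K}` of `R_{0,S}` (equal to `0` if `{J,K} ∉ P(S)`). -/
def reE (R : Type) [CommRing R] (S J K : Finset ℕ) : RRing R S :=
  if Disjoint J K ∧ J ∪ K = S then (if J.min ≤ K.min then reXe R S J else reXe R S K)
  else 0

def reXd (R : Type) [CommRing R] (S I J : Finset ℕ) : RRing R S :=
  if h : I ⊆ S ∧ J ⊆ S \ I ∧ 1 ≤ I.card ∧ 2 ≤ (S \ I).card ∧ J.min = (S \ I).min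
  then X (Sum.inr ⟨(I, J), h⟩) else 0

/-- The variable `ℝD_{I;J,K}` of `R_{0,S}` (equal to `0` if `(I,{J,K}) ∉ P̃•(S)`). -/
def reD (R : Type) [CommRing R] (S I J K : Finset ℕ) : RRing R S :=
  if Disjoint I (J ∪ K) ∧ Disjoint J K ∧ I ∪ (J ∪ K) = S then
    (if J.min ≤ K.min then reXd R S I J else reXd R S I K)
  else 0

/-- The sign `ε_{J,K}`: `1` if `min (J ∪ K) ∈ J` and `-1` otherwise. -/
def epsm (J K : Finset ℕ) : ℤ := if J.min ≤ K.min then 1 else -1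

/-- `{J,K} ⪯ {J',K'}`. -/
abbrev preceq (J K J' K' : Finset ℕ) : Prop := (J ⊆ J' ∧ K ⊆ K') ∨ (J ⊆ K' ∧ K ⊆ J')

/-- `{J,K} ∈ P(S)`. -/
abbrev validE (S J K : Finset ℕ) : Prop := Disjoint J K ∧ J ∪ K = S

/-- `(I,{J,K}) ∈ P̃•(S)`. -/
abbrev validD (S I J K : Finset ℕ) : Prop :=
  Disjoint I (J ∪ K) ∧ Disjoint J K ∧ I ∪ (J ∪ K) = S ∧ 1 ≤ I.card ∧ 2 ≤ (J ∪ K).card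

/-- The element `E^S_{abc}`. -/
def relE (R : Type) [CommRing R] (S : Finset ℕ) (a b c : ℕ) : RRing R S :=
  (∑ I ∈ S.powerset, ∑ J ∈ (S \ I).powerset,
    if 1 ≤ I.card ∧ 2 ≤ (S \ I).card ∧ a ∈ J ∧ b ∈ J ∧ c ∈ I
    then epsm J ((S \ I) \ J) • reD R S I J ((S \ I) \ J) else 0)
  - (∑ I ∈ S.powerset, ∑ J ∈ (S \ I).powerset,
    if 1 ≤ I.card ∧ 2 ≤ (S \ I).card ∧ a ∈ J ∧ c ∈ J ∧ b ∈ I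
    then epsm J ((S \ I) \ J) • reD R S I J ((S \ I) \ J) else 0)
  - ∑ I ∈ S.powerset, ∑ J ∈ (S \ I).powerset,
    if 1 ≤ I.card ∧ 2 ≤ (S \ I).card ∧ a ∈ I ∧ b ∈ J ∧ c ∈ (S \ I) \ J
    then epsm J ((S \ I) \ J) • reD R S I J ((S \ I) \ J) else 0

/-- The element `Σ_{{J,K} ∈ P(S)} ℝE_{J,K}`. -/
def relEsum (R : Type) [CommRing R] (S : Finset ℕ) : RRing R S :=
  ∑ J ∈ S.powerset.filter (fun J => J.min = S.min), reE R S J (S \ J)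

/-- The ideal `I_{0,S} ⊂ R_{0,S}`. -/
def reIdeal (R : Type) [CommRing R] (S : Finset ℕ) : Ideal (RRing R S) :=
  Ideal.span (
    {x | ∃ J K J' K' : Finset ℕ, validE S J K ∧ validE S J' K' ∧
      x = reE R S J K * reE R S J' K'} ∪
    {x | ∃ J K I' J' K' : Finset ℕ, validE S J K ∧ validD S I' J' K' ∧
      ¬ preceq J' K' J K ∧ x = reE R S J K * reD R S I' J' K'} ∪
    {x | ∃ I J K I' J' K' : Finset ℕ, validD S I J K ∧ validD S I' J' K' ∧
      ¬ preceq J K J' K' ∧ ¬ preceq J' K' J K ∧ ¬ J ∪ K ⊆ I' ∧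
      x = reD R S I J K * reD R S I' J' K'} ∪
    {relEsum R S} ∪
    {x | ∃ a b c : ℕ, a ∈ S ∧ b ∈ S ∧ c ∈ S ∧ a ≠ b ∧ a ≠ c ∧ b ≠ c ∧
      x = relE R S a b c})

/-- The element `G_{abc}` of Remark `RcM04rel_e2b2`. -/
def relG (R : Type) [CommRing R] (S : Finset ℕ) (a b c : ℕ) : RRing R S :=
  (∑ I ∈ S.powerset, ∑ J ∈ (S \ I).powerset,
    if 1 ≤ I.card ∧ 2 ≤ (S \ I).card ∧ a ∈ J ∧ b ∉ I ∧ c ∈ I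
    then epsm J ((S \ I) \ J) • reD R S I J ((S \ I) \ J) else 0)
  - ∑ I ∈ S.powerset, ∑ J ∈ (S \ I).powerset,
    if 1 ≤ I.card ∧ 2 ≤ (S \ I).card ∧ a ∈ J ∧ b ∈ I ∧ c ∉ I
    then epsm J ((S \ I) \ J) • reD R S I J ((S \ I) \ J) else 0

/-- The homomorphism `F : R_{0,[ℓ]} → R_{0,[ℓ+1]}`. -/
def Fre (R : Type) [CommRing R] (ℓ : ℕ) : RRing R (Iset ℓ) →ₐ[R] RRing R (Iset (ℓ + 1)) :=
  aeval fun ix =>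
    match ix with
    | Sum.inl e =>
        reE R (Iset (ℓ + 1)) (e.1 ∪ {ℓ + 1}) (Iset ℓ \ e.1)
        + reE R (Iset (ℓ + 1)) e.1 ((Iset ℓ \ e.1) ∪ {ℓ + 1})
    | Sum.inr d =>
        reD R (Iset (ℓ + 1)) (d.1.1 ∪ {ℓ + 1}) d.1.2 ((Iset ℓ \ d.1.1) \ d.1.2)
        + reD R (Iset (ℓ + 1)) d.1.1 (d.1.2 ∪ {ℓ + 1}) ((Iset ℓ \ d.1.1) \ d.1.2)
        + reD R (Iset (ℓ + 1)) d.1.1 d.1.2 (((Iset ℓ \ d.1.1) \ d.1.2) ∪ {ℓ + 1})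

/-- `ℝẼ⁰_{J,K} = ℝD_{{ℓ+1};J,K} ∈ R_{0,[ℓ+1]}`. -/
def reEt0 (R : Type) [CommRing R] (ℓ : ℕ) (J K : Finset ℕ) : RRing R (Iset (ℓ + 1)) :=
  reD R (Iset (ℓ + 1)) {ℓ + 1} J K

/-- `ℝẼ⁻_{J,K} = ℝE_{J,K∪{ℓ+1}} ∈ R_{0,[ℓ+1]}`. -/
def reEtm (R : Type) [CommRing R] (ℓ : ℕ) (J K : Finset ℕ) : RRing R (Iset (ℓ + 1)) :=
  reE R (Iset (ℓ + 1)) J (K ∪ {ℓ + 1})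

/-- `ℝD̃⁰_{I;J,K} ∈ R_{0,[ℓ+1]}` (for `(I,{J,K})` written with `min (J∪K) ∈ J`). -/
def reDt0 (R : Type) [CommRing R] (ℓ : ℕ) (I J K : Finset ℕ) : RRing R (Iset (ℓ + 1)) :=
  if 1 ∈ I then reD R (Iset (ℓ + 1)) I (J ∪ {ℓ + 1}) K
  else reD R (Iset (ℓ + 1)) (I ∪ {ℓ + 1}) J K

/-- `ℝD̃⁻_{I;J,K} = ℝD_{I;J,K∪{ℓ+1}} ∈ R_{0,[ℓ+1]}`. -/
def reDtm (R : Type) [CommRing R] (ℓ : ℕ) (I J K : Finset ℕ) : RRing R (Iset (ℓ + 1)) :=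
  reD R (Iset (ℓ + 1)) I J (K ∪ {ℓ + 1})

/-- The homomorphism `F_{J,K} : R^{cx}_{{nd}⊔[ℓ]} → R_{0,[ℓ]}`,
`D_{J',K'} ↦ (-1)^{|K|} ε_{J∩K',K∩K'} ℝD_{J'-{nd};J∩K',K∩K'}` for `nd ∈ J'`; here `nd = 0`. -/
def FJKre (R : Type) [CommRing R] (ℓ : ℕ) (J K : Finset ℕ) :
    CxRing R (insert 0 (Iset ℓ)) →ₐ[R] RRing R (Iset ℓ) :=
  aeval fun i =>
    ((-1 : ℤ) ^ K.card *
        epsm (J ∩ (insert 0 (Iset ℓ) \ i.1)) (K ∩ (insert 0 (Iset ℓ) \ i.1))) •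
      reD R (Iset ℓ) (i.1.erase 0)
        (J ∩ (insert 0 (Iset ℓ) \ i.1)) (K ∩ (insert 0 (Iset ℓ) \ i.1))

/-- The homomorphism `F²_{I;J,K} : R^{cx}_{{nd}⊔(J∪K)} → R_{0,[ℓ]}`,
`D_{J',K'} ↦ (-1)^{|K|} ε_{J∩K',K∩K'} ℝD_{I∪(J'-{nd});J∩K',K∩K'}` for `nd ∈ J'`;
here `nd = 0`. -/
def F2IJK (R : Type) [CommRing R] (ℓ : ℕ) (I J K : Finset ℕ) :
    CxRing R (insert 0 (J ∪ K)) →ₐ[R] RRing R (Iset ℓ) :=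
  aeval fun i =>
    ((-1 : ℤ) ^ K.card *
        epsm (J ∩ (insert 0 (J ∪ K) \ i.1)) (K ∩ (insert 0 (J ∪ K) \ i.1))) •
      reD R (Iset ℓ) (I ∪ i.1.erase 0)
        (J ∩ (insert 0 (J ∪ K) \ i.1)) (K ∩ (insert 0 (J ∪ K) \ i.1))

/-- `nd` for `{nd} ⊔ I`, identified with `min (ℤ⁺ - I)`. -/
def ndOf (I : Finset ℕ) : ℕ := sInf {n : ℕ | 0 < n ∧ n ∉ I}

/-- The homomorphism `F¹_{I;J,K} : R_{0,{nd}⊔I} → R_{0,[ℓ]}` with `nd = min (ℤ⁺ - I)`. -/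
def F1IJK (R : Type) [CommRing R] (ℓ : ℕ) (I J K : Finset ℕ) :
    RRing R (insert (ndOf I) I) →ₐ[R] RRing R (Iset ℓ) :=
  aeval fun ix =>
    match ix with
    | Sum.inl e =>
        if ndOf I ∈ e.1 then
          reE R (Iset ℓ) (J ∪ e.1.erase (ndOf I)) (K ∪ (insert (ndOf I) I \ e.1))
        else
          reE R (Iset ℓ) (J ∪ (insert (ndOf I) I \ e.1).erase (ndOf I)) (K ∪ e.1)
    | Sum.inr d =>
        if ndOf I ∈ d.1.1 then
          reD R (Iset ℓ) (d.1.1.erase (ndOf I) ∪ J ∪ K) d.1.2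
            ((insert (ndOf I) I \ d.1.1) \ d.1.2)
        else if ndOf I ∈ d.1.2 then
          reD R (Iset ℓ) d.1.1 (J ∪ d.1.2.erase (ndOf I))
            (K ∪ ((insert (ndOf I) I \ d.1.1) \ d.1.2))
        else
          reD R (Iset ℓ) d.1.1
            (J ∪ ((insert (ndOf I) I \ d.1.1) \ d.1.2).erase (ndOf I)) (K ∪ d.1.2)

/-- The homomorphism `F_{I;J,K} : R_{0,{nd}⊔I} ⊗ R^{cx}_{{nd}⊔(J∪K)} → R_{0,[ℓ]}`
induced by `F¹_{I;J,K}` and `F²_{I;J,K}`. -/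
def FIJK (R : Type) [CommRing R] (ℓ : ℕ) (I J K : Finset ℕ) :
    TensorProduct R (RRing R (insert (ndOf I) I)) (CxRing R (insert 0 (J ∪ K))) →ₐ[R]
      RRing R (Iset ℓ) :=
  Algebra.TensorProduct.productMap (F1IJK R ℓ I J K) (F2IJK R ℓ I J K)

/-- The ideal `I` of Statement 19, with `x₁,x₂,x₃,y₁,y₂,y₃` being `X 0,…,X 5`. -/
def tgtI19 : Ideal (MvPolynomial (Fin 6) ℚ) :=
  Ideal.span (
    {x | ∃ i j : Fin 6, i.val < 3 ∧ j.val < 3 ∧ x = X i * X j} ∪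
    {x | ∃ i j : Fin 6, 3 ≤ i.val ∧ 3 ≤ j.val ∧ x = X i * X j} ∪
    {x | ∃ i j : Fin 6, i.val < 3 ∧ 3 ≤ j.val ∧ i.val ≠ j.val - 3 ∧ x = X i * X j} ∪
    {X 0 * X 3 - X 1 * X 4, X 0 * X 3 - X 2 * X 5})

namespace S19

/-! #### Sum expansion helpers -/

lemma sumP3 {M : Type*} [AddCommMonoid M] (f : Finset ℕ → M) :
    ∑ J ∈ (Iset 3).powerset, f J =
      f ∅ + f {1} + f {2} + f {3} + f {1,2} + f {1,3} + f {2,3} + f {1,2,3} := by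
  rw [show (Iset 3).powerset =
    ({∅,{1},{2},{3},{1,2},{1,3},{2,3},{1,2,3}} : Finset (Finset ℕ)) from by decide]
  rw [Finset.sum_insert (by decide), Finset.sum_insert (by decide), Finset.sum_insert (by decide),
    Finset.sum_insert (by decide), Finset.sum_insert (by decide), Finset.sum_insert (by decide),
    Finset.sum_insert (by decide), Finset.sum_singleton]
  abel

lemma sumPe {M : Type*} [AddCommMonoid M] (f : Finset ℕ → M) :
    ∑ J ∈ ((Iset 3) \ ∅).powerset, f J =
      f ∅ + f {1} + f {2} + f {3} + f {1,2} + f {1,3} + f {2,3} + f {1,2,3} := by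
  rw [show ((Iset 3) \ ∅).powerset =
    ({∅,{1},{2},{3},{1,2},{1,3},{2,3},{1,2,3}} : Finset (Finset ℕ)) from by decide]
  rw [Finset.sum_insert (by decide), Finset.sum_insert (by decide), Finset.sum_insert (by decide),
    Finset.sum_insert (by decide), Finset.sum_insert (by decide), Finset.sum_insert (by decide),
    Finset.sum_insert (by decide), Finset.sum_singleton]
  abel

lemma sumP23 {M : Type*} [AddCommMonoid M] (f : Finset ℕ → M) :
    ∑ J ∈ ((Iset 3) \ {1}).powerset, f J = f ∅ + f {2} + f {3} + f {2,3} := by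
  rw [show ((Iset 3) \ {1}).powerset = ({∅,{2},{3},{2,3}} : Finset (Finset ℕ)) from by decide]
  rw [Finset.sum_insert (by decide), Finset.sum_insert (by decide), Finset.sum_insert (by decide),
    Finset.sum_singleton]
  abel

lemma sumP13 {M : Type*} [AddCommMonoid M] (f : Finset ℕ → M) :
    ∑ J ∈ ((Iset 3) \ {2}).powerset, f J = f ∅ + f {1} + f {3} + f {1,3} := by
  rw [show ((Iset 3) \ {2}).powerset = ({∅,{1},{3},{1,3}} : Finset (Finset ℕ)) from by decide]
  rw [Finset.sum_insert (by decide), Finset.sum_insert (by decide), Finset.sum_insert (by decide),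
    Finset.sum_singleton]
  abel

lemma sumP12 {M : Type*} [AddCommMonoid M] (f : Finset ℕ → M) :
    ∑ J ∈ ((Iset 3) \ {3}).powerset, f J = f ∅ + f {1} + f {2} + f {1,2} := by
  rw [show ((Iset 3) \ {3}).powerset = ({∅,{1},{2},{1,2}} : Finset (Finset ℕ)) from by decide]
  rw [Finset.sum_insert (by decide), Finset.sum_insert (by decide), Finset.sum_insert (by decide),
    Finset.sum_singleton]
  abel

lemma sumP3c {M : Type*} [AddCommMonoid M] (f : Finset ℕ → M) :
    ∑ J ∈ ((Iset 3) \ {1,2}).powerset, f J = f ∅ + f {3} := by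
  rw [show ((Iset 3) \ {1,2}).powerset = ({∅,{3}} : Finset (Finset ℕ)) from by decide]
  rw [Finset.sum_insert (by decide), Finset.sum_singleton]

lemma sumP2c {M : Type*} [AddCommMonoid M] (f : Finset ℕ → M) :
    ∑ J ∈ ((Iset 3) \ {1,3}).powerset, f J = f ∅ + f {2} := by
  rw [show ((Iset 3) \ {1,3}).powerset = ({∅,{2}} : Finset (Finset ℕ)) from by decide]
  rw [Finset.sum_insert (by decide), Finset.sum_singleton]

lemma sumP1c {M : Type*} [AddCommMonoid M] (f : Finset ℕ → M) :
    ∑ J ∈ ((Iset 3) \ {2,3}).powerset, f J = f ∅ + f {1} := by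
  rw [show ((Iset 3) \ {2,3}).powerset = ({∅,{1}} : Finset (Finset ℕ)) from by decide]
  rw [Finset.sum_insert (by decide), Finset.sum_singleton]

lemma sumP0c {M : Type*} [AddCommMonoid M] (f : Finset ℕ → M) :
    ∑ J ∈ ((Iset 3) \ {1,2,3}).powerset, f J = f ∅ := by
  rw [show ((Iset 3) \ {1,2,3}).powerset = ({∅} : Finset (Finset ℕ)) from by decide]
  rw [Finset.sum_singleton]

lemma sumE4 {M : Type*} [AddCommMonoid M] (f : Finset ℕ → M) :
    ∑ J ∈ Finset.filter (fun J => J.min = (Iset 3).min) (Iset 3).powerset, f J =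
      f {1} + f {1,2} + f {1,3} + f {1,2,3} := by
  rw [show Finset.filter (fun J => J.min = (Iset 3).min) (Iset 3).powerset =
    ({{1},{1,2},{1,3},{1,2,3}} : Finset (Finset ℕ)) from by decide]
  rw [Finset.sum_insert (by decide), Finset.sum_insert (by decide), Finset.sum_insert (by decide),
    Finset.sum_singleton]
  abel

/-! #### The ten variables of `R_{0,[3]}` -/

def vE1 : RRing ℚ (Iset 3) := X (Sum.inl ⟨{1}, by decide⟩)
def vE2 : RRing ℚ (Iset 3) := X (Sum.inl ⟨{1,3}, by decide⟩)
def vE3 : RRing ℚ (Iset 3) := X (Sum.inl ⟨{1,2}, by decide⟩)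
def vE0 : RRing ℚ (Iset 3) := X (Sum.inl ⟨{1,2,3}, by decide⟩)
def vD1 : RRing ℚ (Iset 3) := X (Sum.inr ⟨({1},{2,3}), by decide⟩)
def vD2 : RRing ℚ (Iset 3) := X (Sum.inr ⟨({2},{1,3}), by decide⟩)
def vD3 : RRing ℚ (Iset 3) := X (Sum.inr ⟨({3},{1,2}), by decide⟩)
def vD1' : RRing ℚ (Iset 3) := X (Sum.inr ⟨({1},{2}), by decide⟩)
def vD2' : RRing ℚ (Iset 3) := X (Sum.inr ⟨({2},{1}), by decide⟩)
def vD3' : RRing ℚ (Iset 3) := X (Sum.inr ⟨({3},{1}), by decide⟩)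

/-! #### Evaluation of `reE` and `reD` on the valid pairs -/

lemma eE_1 : reE ℚ (Iset 3) {1} {2,3} = vE1 := by simp +decide [reE, reXe, vE1]
lemma eE_1' : reE ℚ (Iset 3) {2,3} {1} = vE1 := by simp +decide [reE, reXe, vE1]
lemma eE_2 : reE ℚ (Iset 3) {2} {1,3} = vE2 := by simp +decide [reE, reXe, vE2]
lemma eE_2' : reE ℚ (Iset 3) {1,3} {2} = vE2 := by simp +decide [reE, reXe, vE2]
lemma eE_3 : reE ℚ (Iset 3) {3} {1,2} = vE3 := by simp +decide [reE, reXe, vE3]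
lemma eE_3' : reE ℚ (Iset 3) {1,2} {3} = vE3 := by simp +decide [reE, reXe, vE3]
lemma eE_0 : reE ℚ (Iset 3) {1,2,3} ∅ = vE0 := by simp +decide [reE, reXe, vE0]
lemma eE_0' : reE ℚ (Iset 3) ∅ {1,2,3} = vE0 := by simp +decide [reE, reXe, vE0]

lemma eD1a : reD ℚ (Iset 3) {1} {2,3} ∅ = vD1 := by simp +decide [reD, reXd, vD1]
lemma eD1b : reD ℚ (Iset 3) {1} ∅ {2,3} = vD1 := by simp +decide [reD, reXd, vD1]
lemma eD1c : reD ℚ (Iset 3) {1} {2} {3} = vD1' := by simp +decide [reD, reXd, vD1']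
lemma eD1d : reD ℚ (Iset 3) {1} {3} {2} = vD1' := by simp +decide [reD, reXd, vD1']
lemma eD2a : reD ℚ (Iset 3) {2} {1,3} ∅ = vD2 := by simp +decide [reD, reXd, vD2]
lemma eD2b : reD ℚ (Iset 3) {2} ∅ {1,3} = vD2 := by simp +decide [reD, reXd, vD2]
lemma eD2c : reD ℚ (Iset 3) {2} {1} {3} = vD2' := by simp +decide [reD, reXd, vD2']
lemma eD2d : reD ℚ (Iset 3) {2} {3} {1} = vD2' := by simp +decide [reD, reXd, vD2']
lemma eD3a : reD ℚ (Iset 3) {3} {1,2} ∅ = vD3 := by simp +decide [reD, reXd, vD3]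
lemma eD3b : reD ℚ (Iset 3) {3} ∅ {1,2} = vD3 := by simp +decide [reD, reXd, vD3]
lemma eD3c : reD ℚ (Iset 3) {3} {1} {2} = vD3' := by simp +decide [reD, reXd, vD3']
lemma eD3d : reD ℚ (Iset 3) {3} {2} {1} = vD3' := by simp +decide [reD, reXd, vD3']

end S19
namespace S19

/-! #### Evaluation of `relE` and `relEsum` -/

lemma relEsum_eval : relEsum ℚ (Iset 3) = vE1 + vE3 + vE2 + vE0 := by
  rw [relEsum, sumE4]
  simp +decide [reE, reXe, vE1, vE2, vE3, vE0]

lemma relE123 : relE ℚ (Iset 3) 1 2 3 = vD3 - vD2 - vD1' := by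
  rw [relE]
  simp only [sumP3, sumPe, sumP23, sumP13, sumP12, sumP3c, sumP2c, sumP1c, sumP0c]
  simp +decide [reD, reXd, epsm, vD1, vD2, vD3, vD1', vD2', vD3', one_smul, neg_smul]

lemma relE132 : relE ℚ (Iset 3) 1 3 2 = vD2 - vD3 + vD1' := by
  rw [relE]
  simp only [sumP3, sumPe, sumP23, sumP13, sumP12, sumP3c, sumP2c, sumP1c, sumP0c]
  simp +decide [reD, reXd, epsm, vD1, vD2, vD3, vD1', vD2', vD3', one_smul, neg_smul]
  try ring

lemma relE213 : relE ℚ (Iset 3) 2 1 3 = vD3 - vD1 - vD2' := by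
  rw [relE]
  simp only [sumP3, sumPe, sumP23, sumP13, sumP12, sumP3c, sumP2c, sumP1c, sumP0c]
  simp +decide [reD, reXd, epsm, vD1, vD2, vD3, vD1', vD2', vD3', one_smul, neg_smul]

lemma relE231 : relE ℚ (Iset 3) 2 3 1 = vD1 - vD3 + vD2' := by
  rw [relE]
  simp only [sumP3, sumPe, sumP23, sumP13, sumP12, sumP3c, sumP2c, sumP1c, sumP0c]
  simp +decide [reD, reXd, epsm, vD1, vD2, vD3, vD1', vD2', vD3', one_smul, neg_smul]
  try ring

lemma relE312 : relE ℚ (Iset 3) 3 1 2 = vD2 - vD1 - vD3' := by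
  rw [relE]
  simp only [sumP3, sumPe, sumP23, sumP13, sumP12, sumP3c, sumP2c, sumP1c, sumP0c]
  simp +decide [reD, reXd, epsm, vD1, vD2, vD3, vD1', vD2', vD3', one_smul, neg_smul]

lemma relE321 : relE ℚ (Iset 3) 3 2 1 = vD1 - vD2 + vD3' := by
  rw [relE]
  simp only [sumP3, sumPe, sumP23, sumP13, sumP12, sumP3c, sumP2c, sumP1c, sumP0c]
  simp +decide [reD, reXd, epsm, vD1, vD2, vD3, vD1', vD2', vD3', one_smul, neg_smul]
  try ring

end S19
namespace S19

/-! #### The maps `φ` and `ψ` -/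

def g : EIdx (Iset 3) ⊕ DIdx (Iset 3) → MvPolynomial (Fin 6) ℚ :=
  Sum.elim
    (fun e => if e.1 = {1} then X 0 else if e.1 = {1,3} then X 1
      else if e.1 = {1,2} then X 2 else -(X 0 + X 1 + X 2))
    (fun d => if d.1 = ({1},{2,3}) then X 3 else if d.1 = ({2},{1,3}) then X 4
      else if d.1 = ({3},{1,2}) then X 5 else if d.1 = ({1},{2}) then X 5 - X 4
      else if d.1 = ({2},{1}) then X 5 - X 3 else X 4 - X 3)

def φ : RRing ℚ (Iset 3) →ₐ[ℚ] MvPolynomial (Fin 6) ℚ := aeval g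

def gψ : Fin 6 → RRing ℚ (Iset 3)
  | 0 => vE1 | 1 => vE2 | 2 => vE3 | 3 => vD1 | 4 => vD2 | 5 => vD3

def ψ : MvPolynomial (Fin 6) ℚ →ₐ[ℚ] RRing ℚ (Iset 3) := aeval gψ

lemma φv1 : φ vE1 = X 0 := by simp +decide [φ, vE1, g]
lemma φv2 : φ vE2 = X 1 := by simp +decide [φ, vE2, g]
lemma φv3 : φ vE3 = X 2 := by simp +decide [φ, vE3, g]
lemma φv0 : φ vE0 = -(X 0 + X 1 + X 2) := by simp +decide [φ, vE0, g]
lemma φw1 : φ vD1 = X 3 := by simp +decide [φ, vD1, g]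
lemma φw2 : φ vD2 = X 4 := by simp +decide [φ, vD2, g]
lemma φw3 : φ vD3 = X 5 := by simp +decide [φ, vD3, g]
lemma φw1' : φ vD1' = X 5 - X 4 := by simp +decide [φ, vD1', g]
lemma φw2' : φ vD2' = X 5 - X 3 := by simp +decide [φ, vD2', g]
lemma φw3' : φ vD3' = X 4 - X 3 := by simp +decide [φ, vD3', g]

lemma ψ0 : ψ (X 0) = vE1 := by simp [ψ, gψ]
lemma ψ1 : ψ (X 1) = vE2 := by simp [ψ, gψ]
lemma ψ2 : ψ (X 2) = vE3 := by simp [ψ, gψ]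
lemma ψ3 : ψ (X 3) = vD1 := by simp [ψ, gψ]
lemma ψ4 : ψ (X 4) = vD2 := by simp [ψ, gψ]
lemma ψ5 : ψ (X 5) = vD3 := by simp [ψ, gψ]

/-! #### Membership lemmas for `tgtI19` -/

lemma tA {i j : Fin 6} (hi : i.val < 3) (hj : j.val < 3) : X i * X j ∈ tgtI19 :=
  Ideal.subset_span (Or.inl (Or.inl (Or.inl ⟨i, j, hi, hj, rfl⟩)))

lemma tB {i j : Fin 6} (hi : 3 ≤ i.val) (hj : 3 ≤ j.val) : X i * X j ∈ tgtI19 :=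
  Ideal.subset_span (Or.inl (Or.inl (Or.inr ⟨i, j, hi, hj, rfl⟩)))

lemma tC {i j : Fin 6} (hi : i.val < 3) (hj : 3 ≤ j.val) (hij : i.val ≠ j.val - 3) :
    X i * X j ∈ tgtI19 :=
  Ideal.subset_span (Or.inl (Or.inr ⟨i, j, hi, hj, hij, rfl⟩))

lemma tD1 : X 0 * X 3 - X 1 * X 4 ∈ tgtI19 :=
  Ideal.subset_span (Or.inr (Set.mem_insert _ _))

lemma tD2 : X 0 * X 3 - X 2 * X 5 ∈ tgtI19 :=
  Ideal.subset_span (Or.inr (Set.mem_insert_iff.mpr (Or.inr rfl)))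

lemma m1 : (X 0 : MvPolynomial (Fin 6) ℚ) * X 4 ∈ tgtI19 := tC (by decide) (by decide) (by decide)
lemma m2 : (X 0 : MvPolynomial (Fin 6) ℚ) * X 5 ∈ tgtI19 := tC (by decide) (by decide) (by decide)
lemma m3 : (X 0 : MvPolynomial (Fin 6) ℚ) * (X 5 - X 4) ∈ tgtI19 := by
  have h : (X 0 : MvPolynomial (Fin 6) ℚ) * (X 5 - X 4) = X 0 * X 5 - X 0 * X 4 := by ring
  rw [h]; exact sub_mem m2 m1
lemma m4 : (X 1 : MvPolynomial (Fin 6) ℚ) * X 3 ∈ tgtI19 := tC (by decide) (by decide) (by decide)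
lemma m5 : (X 1 : MvPolynomial (Fin 6) ℚ) * X 5 ∈ tgtI19 := tC (by decide) (by decide) (by decide)
lemma m6 : (X 1 : MvPolynomial (Fin 6) ℚ) * (X 5 - X 3) ∈ tgtI19 := by
  have h : (X 1 : MvPolynomial (Fin 6) ℚ) * (X 5 - X 3) = X 1 * X 5 - X 1 * X 3 := by ring
  rw [h]; exact sub_mem m5 m4
lemma m7 : (X 2 : MvPolynomial (Fin 6) ℚ) * X 3 ∈ tgtI19 := tC (by decide) (by decide) (by decide)
lemma m8 : (X 2 : MvPolynomial (Fin 6) ℚ) * X 4 ∈ tgtI19 := tC (by decide) (by decide) (by decide)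
lemma m9 : (X 2 : MvPolynomial (Fin 6) ℚ) * (X 4 - X 3) ∈ tgtI19 := by
  have h : (X 2 : MvPolynomial (Fin 6) ℚ) * (X 4 - X 3) = X 2 * X 4 - X 2 * X 3 := by ring
  rw [h]; exact sub_mem m8 m7
lemma m10 : -(X 0 + X 1 + X 2 : MvPolynomial (Fin 6) ℚ) * (X 5 - X 4) ∈ tgtI19 := by
  have h : -(X 0 + X 1 + X 2 : MvPolynomial (Fin 6) ℚ) * (X 5 - X 4) =
      ((X 0 * X 3 - X 2 * X 5) - (X 0 * X 3 - X 1 * X 4)) - X 0 * X 5 + X 0 * X 4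
        - X 1 * X 5 + X 2 * X 4 := by ring
  rw [h]
  exact add_mem (sub_mem (add_mem (sub_mem (sub_mem tD2 tD1) m2) m1) m5) m8
lemma m11 : -(X 0 + X 1 + X 2 : MvPolynomial (Fin 6) ℚ) * (X 5 - X 3) ∈ tgtI19 := by
  have h : -(X 0 + X 1 + X 2 : MvPolynomial (Fin 6) ℚ) * (X 5 - X 3) =
      (X 0 * X 3 - X 2 * X 5) - X 0 * X 5 - X 1 * X 5 + X 1 * X 3 + X 2 * X 3 := by ring
  rw [h]
  exact add_mem (add_mem (sub_mem (sub_mem tD2 m2) m5) m4) m7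
lemma m12 : -(X 0 + X 1 + X 2 : MvPolynomial (Fin 6) ℚ) * (X 4 - X 3) ∈ tgtI19 := by
  have h : -(X 0 + X 1 + X 2 : MvPolynomial (Fin 6) ℚ) * (X 4 - X 3) =
      (X 0 * X 3 - X 1 * X 4) - X 0 * X 4 - X 2 * X 4 + X 1 * X 3 + X 2 * X 3 := by ring
  rw [h]
  exact add_mem (add_mem (sub_mem (sub_mem tD1 m1) m8) m4) m7

end S19
namespace S19

/-! #### Span lemmas for the `φ` direction -/

def MX : Submodule ℚ (MvPolynomial (Fin 6) ℚ) := Submodule.span ℚ {X 0, X 1, X 2}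
def MY : Submodule ℚ (MvPolynomial (Fin 6) ℚ) := Submodule.span ℚ {X 3, X 4, X 5}

lemma gE_mem (e : EIdx (Iset 3)) : g (Sum.inl e) ∈ MX := by
  have h0 : (X 0 : MvPolynomial (Fin 6) ℚ) ∈ MX := Submodule.subset_span (by simp)
  have h1 : (X 1 : MvPolynomial (Fin 6) ℚ) ∈ MX := Submodule.subset_span (by simp)
  have h2 : (X 2 : MvPolynomial (Fin 6) ℚ) ∈ MX := Submodule.subset_span (by simp)
  simp only [g, Sum.elim_inl]
  split_ifs <;> first | assumption | exact neg_mem (add_mem (add_mem h0 h1) h2)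

lemma gD_mem (d : DIdx (Iset 3)) : g (Sum.inr d) ∈ MY := by
  have h3 : (X 3 : MvPolynomial (Fin 6) ℚ) ∈ MY := Submodule.subset_span (by simp)
  have h4 : (X 4 : MvPolynomial (Fin 6) ℚ) ∈ MY := Submodule.subset_span (by simp)
  have h5 : (X 5 : MvPolynomial (Fin 6) ℚ) ∈ MY := Submodule.subset_span (by simp)
  simp only [g, Sum.elim_inr]
  split_ifs <;> first | assumption | exact sub_mem h5 h4 | exact sub_mem h5 h3 |
    exact sub_mem h4 h3

lemma phiE_span (J K : Finset ℕ) : φ (reE ℚ (Iset 3) J K) ∈ MX := by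
  rw [reE]
  split_ifs with h h'
  · rw [reXe]
    split_ifs with h''
    · simpa [φ] using gE_mem ⟨J, h''⟩
    · simp only [map_zero]; exact zero_mem _
  · rw [reXe]
    split_ifs with h''
    · simpa [φ] using gE_mem ⟨K, h''⟩
    · simp only [map_zero]; exact zero_mem _
  · simp only [map_zero]; exact zero_mem _

lemma phiD_span (I J K : Finset ℕ) : φ (reD ℚ (Iset 3) I J K) ∈ MY := by
  rw [reD]
  split_ifs with h h'
  · rw [reXd]
    split_ifs with h''
    · simpa [φ] using gD_mem ⟨(I, J), h''⟩
    · simp only [map_zero]; exact zero_mem _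
  · rw [reXd]
    split_ifs with h''
    · simpa [φ] using gD_mem ⟨(I, K), h''⟩
    · simp only [map_zero]; exact zero_mem _
  · simp only [map_zero]; exact zero_mem _

lemma span_mul_mem {A : Type} [CommRing A] [Algebra ℚ A] {s t : Set A} {I : Ideal A}
    (h : ∀ a ∈ s, ∀ b ∈ t, a * b ∈ I) {p q : A}
    (hp : p ∈ Submodule.span ℚ s) (hq : q ∈ Submodule.span ℚ t) : p * q ∈ I := by
  induction hp using Submodule.span_induction with
  | mem x hx =>
    induction hq using Submodule.span_induction with
    | mem y hy => exact h _ hx _ hy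
    | zero => simpa using I.zero_mem
    | add y z _ _ hy hz => simpa [mul_add] using add_mem hy hz
    | smul a y _ hy => rw [mul_smul_comm, Algebra.smul_def]; exact I.mul_mem_left _ hy
  | zero => simpa using I.zero_mem
  | add x y _ _ hx hy => simpa [add_mul] using add_mem hx hy
  | smul a x _ hx => rw [smul_mul_assoc, Algebra.smul_def]; exact I.mul_mem_left _ hx

lemma hXXt : ∀ a ∈ ({X 0, X 1, X 2} : Set (MvPolynomial (Fin 6) ℚ)),
    ∀ b ∈ ({X 0, X 1, X 2} : Set (MvPolynomial (Fin 6) ℚ)), a * b ∈ tgtI19 := by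
  rintro a (rfl | rfl | rfl) b (rfl | rfl | rfl) <;> exact tA (by decide) (by decide)

lemma hYYt : ∀ a ∈ ({X 3, X 4, X 5} : Set (MvPolynomial (Fin 6) ℚ)),
    ∀ b ∈ ({X 3, X 4, X 5} : Set (MvPolynomial (Fin 6) ℚ)), a * b ∈ tgtI19 := by
  rintro a (rfl | rfl | rfl) b (rfl | rfl | rfl) <;> exact tB (by decide) (by decide)

/-! #### Case enumeration lemmas -/

lemma validE_cases {J K : Finset ℕ} (h : validE (Iset 3) J K) :
    J = ∅ ∧ K = {1,2,3} ∨ J = {1} ∧ K = {2,3} ∨ J = {2} ∧ K = {1,3} ∨ J = {3} ∧ K = {1,2} ∨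
    J = {1,2} ∧ K = {3} ∨ J = {1,3} ∧ K = {2} ∨ J = {2,3} ∧ K = {1} ∨
    J = {1,2,3} ∧ K = ∅ := by
  obtain ⟨hd, hu⟩ := h
  have hK : K = Iset 3 \ J := by rw [← hu, Finset.union_sdiff_cancel_left hd]
  have hJ : J ∈ ({∅,{1},{2},{3},{1,2},{1,3},{2,3},{1,2,3}} : Finset (Finset ℕ)) := by
    rw [show ({∅,{1},{2},{3},{1,2},{1,3},{2,3},{1,2,3}} : Finset (Finset ℕ)) =
      (Iset 3).powerset from by decide]
    exact Finset.mem_powerset.mpr (hu ▸ Finset.subset_union_left)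
  subst hK
  fin_cases hJ <;> decide

lemma validD_cases {I J K : Finset ℕ} (h : validD (Iset 3) I J K) :
    I = {1} ∧ J = {2,3} ∧ K = ∅ ∨ I = {1} ∧ J = ∅ ∧ K = {2,3} ∨
    I = {1} ∧ J = {2} ∧ K = {3} ∨ I = {1} ∧ J = {3} ∧ K = {2} ∨
    I = {2} ∧ J = {1,3} ∧ K = ∅ ∨ I = {2} ∧ J = ∅ ∧ K = {1,3} ∨
    I = {2} ∧ J = {1} ∧ K = {3} ∨ I = {2} ∧ J = {3} ∧ K = {1} ∨
    I = {3} ∧ J = {1,2} ∧ K = ∅ ∨ I = {3} ∧ J = ∅ ∧ K = {1,2} ∨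
    I = {3} ∧ J = {1} ∧ K = {2} ∨ I = {3} ∧ J = {2} ∧ K = {1} := by
  obtain ⟨hd1, hd2, hu, hc1, hc2⟩ := h
  have hJK : J ∪ K = Iset 3 \ I := by rw [← hu, Finset.union_sdiff_cancel_left hd1]
  have hK : K = (Iset 3 \ I) \ J := by
    rw [← hJK, Finset.union_sdiff_cancel_left hd2]
  have hJ : J ⊆ Iset 3 \ I := hJK ▸ Finset.subset_union_left
  rw [hJK] at hc2
  have hI : I ∈ ({∅,{1},{2},{3},{1,2},{1,3},{2,3},{1,2,3}} : Finset (Finset ℕ)) := by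
    rw [show ({∅,{1},{2},{3},{1,2},{1,3},{2,3},{1,2,3}} : Finset (Finset ℕ)) =
      (Iset 3).powerset from by decide]
    exact Finset.mem_powerset.mpr (hu ▸ Finset.subset_union_left)
  subst hK
  fin_cases hI
  · exact absurd hc1 (by decide)
  · have hJ' : J ∈ ({∅,{2},{3},{2,3}} : Finset (Finset ℕ)) := by
      rw [show ({∅,{2},{3},{2,3}} : Finset (Finset ℕ)) =
        (Iset 3 \ {1}).powerset from by decide]
      exact Finset.mem_powerset.mpr hJ
    fin_cases hJ' <;> decide
  · have hJ' : J ∈ ({∅,{1},{3},{1,3}} : Finset (Finset ℕ)) := by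
      rw [show ({∅,{1},{3},{1,3}} : Finset (Finset ℕ)) =
        (Iset 3 \ {2}).powerset from by decide]
      exact Finset.mem_powerset.mpr hJ
    fin_cases hJ' <;> decide
  · have hJ' : J ∈ ({∅,{1},{2},{1,2}} : Finset (Finset ℕ)) := by
      rw [show ({∅,{1},{2},{1,2}} : Finset (Finset ℕ)) =
        (Iset 3 \ {3}).powerset from by decide]
      exact Finset.mem_powerset.mpr hJ
    fin_cases hJ' <;> decide
  · exact absurd hc2 (by decide)
  · exact absurd hc2 (by decide)
  · exact absurd hc2 (by decide)
  · exact absurd hc2 (by decide)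

end S19
namespace S19

/-! #### `φ` maps the ideal `I_{0,[3]}` into `tgtI19` -/

lemma phirelsum : φ (relEsum ℚ (Iset 3)) = 0 := by
  rw [relEsum_eval]; simp only [map_add, φv1, φv2, φv3, φv0]; ring

lemma phirel123 : φ (relE ℚ (Iset 3) 1 2 3) = 0 := by
  rw [relE123]; simp only [map_sub, φw3, φw2, φw1']; ring
lemma phirel132 : φ (relE ℚ (Iset 3) 1 3 2) = 0 := by
  rw [relE132]; simp only [map_sub, map_add, φw3, φw2, φw1']; ring
lemma phirel213 : φ (relE ℚ (Iset 3) 2 1 3) = 0 := by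
  rw [relE213]; simp only [map_sub, φw3, φw1, φw2']; ring
lemma phirel231 : φ (relE ℚ (Iset 3) 2 3 1) = 0 := by
  rw [relE231]; simp only [map_sub, map_add, φw3, φw1, φw2']; ring
lemma phirel312 : φ (relE ℚ (Iset 3) 3 1 2) = 0 := by
  rw [relE312]; simp only [map_sub, φw2, φw1, φw3']; ring
lemma phirel321 : φ (relE ℚ (Iset 3) 3 2 1) = 0 := by
  rw [relE321]; simp only [map_sub, map_add, φw2, φw1, φw3']; ring

lemma phi_ideal : ∀ a ∈ reIdeal ℚ (Iset 3), φ a ∈ tgtI19 := by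
  have hle : reIdeal ℚ (Iset 3) ≤ Ideal.comap φ.toRingHom tgtI19 := by
    rw [reIdeal, Ideal.span_le]
    rintro x hx
    simp only [Set.mem_union, Set.mem_setOf_eq, Set.mem_singleton_iff] at hx
    simp only [SetLike.mem_coe, Ideal.mem_comap, AlgHom.toRingHom_eq_coe,
      RingHom.coe_coe]
    rcases hx with ((((⟨J, K, J', K', h1, h2, rfl⟩ | ⟨J, K, I', J', K', h1, h2, h3, rfl⟩) |
      ⟨I, J, K, I', J', K', h1, h2, h3, h4, h5, rfl⟩) | rfl) |
      ⟨a, b, c, ha, hb, hc, hab, hac, hbc, rfl⟩)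
    · rw [map_mul]
      exact span_mul_mem hXXt (phiE_span J K) (phiE_span J' K')
    · rcases validE_cases h1 with ⟨rfl, rfl⟩ | ⟨rfl, rfl⟩ | ⟨rfl, rfl⟩ | ⟨rfl, rfl⟩ |
        ⟨rfl, rfl⟩ | ⟨rfl, rfl⟩ | ⟨rfl, rfl⟩ | ⟨rfl, rfl⟩ <;>
      rcases validD_cases h2 with ⟨rfl, rfl, rfl⟩ | ⟨rfl, rfl, rfl⟩ | ⟨rfl, rfl, rfl⟩ |
        ⟨rfl, rfl, rfl⟩ | ⟨rfl, rfl, rfl⟩ | ⟨rfl, rfl, rfl⟩ | ⟨rfl, rfl, rfl⟩ |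
        ⟨rfl, rfl, rfl⟩ | ⟨rfl, rfl, rfl⟩ | ⟨rfl, rfl, rfl⟩ | ⟨rfl, rfl, rfl⟩ |
        ⟨rfl, rfl, rfl⟩ <;>
      first
        | exact absurd (by decide) h3
        | (rw [map_mul]
           simp only [eE_1, eE_1', eE_2, eE_2', eE_3, eE_3', eE_0, eE_0',
             eD1a, eD1b, eD1c, eD1d, eD2a, eD2b, eD2c, eD2d, eD3a, eD3b, eD3c, eD3d,
             φv1, φv2, φv3, φv0, φw1, φw2, φw3, φw1', φw2', φw3']
           first
             | exact m1 | exact m2 | exact m3 | exact m4 | exact m5 | exact m6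
             | exact m7 | exact m8 | exact m9 | exact m10 | exact m11 | exact m12)
    · rw [map_mul]
      exact span_mul_mem hYYt (phiD_span I J K) (phiD_span I' J' K')
    · rw [phirelsum]; exact zero_mem _
    · have ha' : a ∈ ({1,2,3} : Finset ℕ) := by
        rw [show ({1,2,3} : Finset ℕ) = Iset 3 from by decide]; exact ha
      have hb' : b ∈ ({1,2,3} : Finset ℕ) := by
        rw [show ({1,2,3} : Finset ℕ) = Iset 3 from by decide]; exact hb
      have hc' : c ∈ ({1,2,3} : Finset ℕ) := by
        rw [show ({1,2,3} : Finset ℕ) = Iset 3 from by decide]; exact hc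
      fin_cases ha' <;> fin_cases hb' <;> fin_cases hc' <;>
        first
          | exact absurd rfl hab | exact absurd rfl hac | exact absurd rfl hbc
          | (rw [phirel123]; exact zero_mem _) | (rw [phirel132]; exact zero_mem _)
          | (rw [phirel213]; exact zero_mem _) | (rw [phirel231]; exact zero_mem _)
          | (rw [phirel312]; exact zero_mem _) | (rw [phirel321]; exact zero_mem _)
  intro a ha
  exact hle ha

end S19
namespace S19

/-! #### Membership lemmas for `reIdeal` -/

lemma rmem1 (J K J' K' : Finset ℕ) (h : validE (Iset 3) J K) (h' : validE (Iset 3) J' K') :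
    reE ℚ (Iset 3) J K * reE ℚ (Iset 3) J' K' ∈ reIdeal ℚ (Iset 3) :=
  Ideal.subset_span (Or.inl (Or.inl (Or.inl (Or.inl ⟨J, K, J', K', h, h', rfl⟩))))

lemma rmem2 (J K I' J' K' : Finset ℕ) (h : validE (Iset 3) J K) (h' : validD (Iset 3) I' J' K')
    (hp : ¬ preceq J' K' J K) :
    reE ℚ (Iset 3) J K * reD ℚ (Iset 3) I' J' K' ∈ reIdeal ℚ (Iset 3) :=
  Ideal.subset_span (Or.inl (Or.inl (Or.inl (Or.inr ⟨J, K, I', J', K', h, h', hp, rfl⟩))))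

lemma rmem3 (I J K I' J' K' : Finset ℕ) (h : validD (Iset 3) I J K)
    (h' : validD (Iset 3) I' J' K') (hp : ¬ preceq J K J' K') (hp' : ¬ preceq J' K' J K)
    (hs : ¬ J ∪ K ⊆ I') :
    reD ℚ (Iset 3) I J K * reD ℚ (Iset 3) I' J' K' ∈ reIdeal ℚ (Iset 3) :=
  Ideal.subset_span (Or.inl (Or.inl (Or.inr ⟨I, J, K, I', J', K', h, h', hp, hp', hs, rfl⟩)))

lemma rmem4 : relEsum ℚ (Iset 3) ∈ reIdeal ℚ (Iset 3) :=
  Ideal.subset_span (Or.inl (Or.inr rfl))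

lemma rmem5 (a b c : ℕ) (ha : a ∈ Iset 3) (hb : b ∈ Iset 3) (hc : c ∈ Iset 3)
    (hab : a ≠ b) (hac : a ≠ c) (hbc : b ≠ c) :
    relE ℚ (Iset 3) a b c ∈ reIdeal ℚ (Iset 3) :=
  Ideal.subset_span (Or.inr ⟨a, b, c, ha, hb, hc, hab, hac, hbc, rfl⟩)

/-! #### Products of variables lie in the ideal -/

lemma pE11 : vE1 * vE1 ∈ reIdeal ℚ (Iset 3) := by
  rw [← eE_1]; exact rmem1 {1} {2,3} {1} {2,3} (by decide) (by decide)
lemma pE12 : vE1 * vE2 ∈ reIdeal ℚ (Iset 3) := by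
  rw [← eE_1, ← eE_2]; exact rmem1 {1} {2,3} {2} {1,3} (by decide) (by decide)
lemma pE13 : vE1 * vE3 ∈ reIdeal ℚ (Iset 3) := by
  rw [← eE_1, ← eE_3]; exact rmem1 {1} {2,3} {3} {1,2} (by decide) (by decide)
lemma pE21 : vE2 * vE1 ∈ reIdeal ℚ (Iset 3) := by
  rw [← eE_1, ← eE_2]; exact rmem1 {2} {1,3} {1} {2,3} (by decide) (by decide)
lemma pE22 : vE2 * vE2 ∈ reIdeal ℚ (Iset 3) := by
  rw [← eE_2]; exact rmem1 {2} {1,3} {2} {1,3} (by decide) (by decide)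
lemma pE23 : vE2 * vE3 ∈ reIdeal ℚ (Iset 3) := by
  rw [← eE_2, ← eE_3]; exact rmem1 {2} {1,3} {3} {1,2} (by decide) (by decide)
lemma pE31 : vE3 * vE1 ∈ reIdeal ℚ (Iset 3) := by
  rw [← eE_1, ← eE_3]; exact rmem1 {3} {1,2} {1} {2,3} (by decide) (by decide)
lemma pE32 : vE3 * vE2 ∈ reIdeal ℚ (Iset 3) := by
  rw [← eE_2, ← eE_3]; exact rmem1 {3} {1,2} {2} {1,3} (by decide) (by decide)
lemma pE33 : vE3 * vE3 ∈ reIdeal ℚ (Iset 3) := by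
  rw [← eE_3]; exact rmem1 {3} {1,2} {3} {1,2} (by decide) (by decide)

lemma pD12 : vD1 * vD2 ∈ reIdeal ℚ (Iset 3) := by
  rw [← eD1a, ← eD2a]
  exact rmem3 {1} {2,3} ∅ {2} {1,3} ∅ (by decide) (by decide) (by decide) (by decide) (by decide)
lemma pD13 : vD1 * vD3 ∈ reIdeal ℚ (Iset 3) := by
  rw [← eD1a, ← eD3a]
  exact rmem3 {1} {2,3} ∅ {3} {1,2} ∅ (by decide) (by decide) (by decide) (by decide) (by decide)
lemma pD21 : vD2 * vD1 ∈ reIdeal ℚ (Iset 3) := by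
  rw [← eD1a, ← eD2a]
  exact rmem3 {2} {1,3} ∅ {1} {2,3} ∅ (by decide) (by decide) (by decide) (by decide) (by decide)
lemma pD23 : vD2 * vD3 ∈ reIdeal ℚ (Iset 3) := by
  rw [← eD2a, ← eD3a]
  exact rmem3 {2} {1,3} ∅ {3} {1,2} ∅ (by decide) (by decide) (by decide) (by decide) (by decide)
lemma pD31 : vD3 * vD1 ∈ reIdeal ℚ (Iset 3) := by
  rw [← eD1a, ← eD3a]
  exact rmem3 {3} {1,2} ∅ {1} {2,3} ∅ (by decide) (by decide) (by decide) (by decide) (by decide)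
lemma pD32 : vD3 * vD2 ∈ reIdeal ℚ (Iset 3) := by
  rw [← eD2a, ← eD3a]
  exact rmem3 {3} {1,2} ∅ {2} {1,3} ∅ (by decide) (by decide) (by decide) (by decide) (by decide)

lemma pDq1 : vD1 * vD2' ∈ reIdeal ℚ (Iset 3) := by
  rw [← eD1a, ← eD2c]
  exact rmem3 {1} {2,3} ∅ {2} {1} {3} (by decide) (by decide) (by decide) (by decide) (by decide)
lemma pDq2 : vD2 * vD1' ∈ reIdeal ℚ (Iset 3) := by
  rw [← eD2a, ← eD1c]
  exact rmem3 {2} {1,3} ∅ {1} {2} {3} (by decide) (by decide) (by decide) (by decide) (by decide)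
lemma pDq3 : vD3 * vD1' ∈ reIdeal ℚ (Iset 3) := by
  rw [← eD3a, ← eD1c]
  exact rmem3 {3} {1,2} ∅ {1} {2} {3} (by decide) (by decide) (by decide) (by decide) (by decide)

lemma pD11 : vD1 * vD1 ∈ reIdeal ℚ (Iset 3) := by
  have h : vD1 * vD1 = vD1 * vD3 - vD1 * relE ℚ (Iset 3) 2 1 3 - vD1 * vD2' := by
    rw [relE213]; ring
  rw [h]
  exact sub_mem (sub_mem pD13 (Ideal.mul_mem_left _ _ (rmem5 2 1 3 (by decide) (by decide)
    (by decide) (by decide) (by decide) (by decide)))) pDq1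
lemma pD22 : vD2 * vD2 ∈ reIdeal ℚ (Iset 3) := by
  have h : vD2 * vD2 = vD2 * vD3 - vD2 * relE ℚ (Iset 3) 1 2 3 - vD2 * vD1' := by
    rw [relE123]; ring
  rw [h]
  exact sub_mem (sub_mem pD23 (Ideal.mul_mem_left _ _ (rmem5 1 2 3 (by decide) (by decide)
    (by decide) (by decide) (by decide) (by decide)))) pDq2
lemma pD33 : vD3 * vD3 ∈ reIdeal ℚ (Iset 3) := by
  have h : vD3 * vD3 = vD3 * relE ℚ (Iset 3) 1 2 3 + vD3 * vD2 + vD3 * vD1' := by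
    rw [relE123]; ring
  rw [h]
  exact add_mem (add_mem (Ideal.mul_mem_left _ _ (rmem5 1 2 3 (by decide) (by decide)
    (by decide) (by decide) (by decide) (by decide))) pD32) pDq3

lemma pED12 : vE1 * vD2 ∈ reIdeal ℚ (Iset 3) := by
  rw [← eE_1, ← eD2a]
  exact rmem2 {1} {2,3} {2} {1,3} ∅ (by decide) (by decide) (by decide)
lemma pED13 : vE1 * vD3 ∈ reIdeal ℚ (Iset 3) := by
  rw [← eE_1, ← eD3a]
  exact rmem2 {1} {2,3} {3} {1,2} ∅ (by decide) (by decide) (by decide)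
lemma pED21 : vE2 * vD1 ∈ reIdeal ℚ (Iset 3) := by
  rw [← eE_2, ← eD1a]
  exact rmem2 {2} {1,3} {1} {2,3} ∅ (by decide) (by decide) (by decide)
lemma pED23 : vE2 * vD3 ∈ reIdeal ℚ (Iset 3) := by
  rw [← eE_2, ← eD3a]
  exact rmem2 {2} {1,3} {3} {1,2} ∅ (by decide) (by decide) (by decide)
lemma pED31 : vE3 * vD1 ∈ reIdeal ℚ (Iset 3) := by
  rw [← eE_3, ← eD1a]
  exact rmem2 {3} {1,2} {1} {2,3} ∅ (by decide) (by decide) (by decide)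
lemma pED32 : vE3 * vD2 ∈ reIdeal ℚ (Iset 3) := by
  rw [← eE_3, ← eD2a]
  exact rmem2 {3} {1,2} {2} {1,3} ∅ (by decide) (by decide) (by decide)

lemma pE0D3' : vE0 * vD3' ∈ reIdeal ℚ (Iset 3) := by
  rw [← eE_0, ← eD3c]
  exact rmem2 {1,2,3} ∅ {3} {1} {2} (by decide) (by decide) (by decide)
lemma pE0D2' : vE0 * vD2' ∈ reIdeal ℚ (Iset 3) := by
  rw [← eE_0, ← eD2c]
  exact rmem2 {1,2,3} ∅ {2} {1} {3} (by decide) (by decide) (by decide)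

/-- `x₁ y₁ - x₂ y₂` -/
lemma rbin1 : vE1 * vD1 - vE2 * vD2 ∈ reIdeal ℚ (Iset 3) := by
  have h : vE1 * vD1 - vE2 * vD2 =
      vD1 * relEsum ℚ (Iset 3) - vD2 * relEsum ℚ (Iset 3)
      - vE2 * vD1 - vE3 * vD1 + vE1 * vD2 + vE3 * vD2
      + vE0 * relE ℚ (Iset 3) 3 1 2 + vE0 * vD3' := by
    rw [relEsum_eval, relE312]; ring
  rw [h]
  refine add_mem (add_mem (add_mem (add_mem (sub_mem (sub_mem (sub_mem
    (Ideal.mul_mem_left _ _ rmem4) (Ideal.mul_mem_left _ _ rmem4)) pED21) pED31)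
    pED12) pED32) (Ideal.mul_mem_left _ _ (rmem5 3 1 2 (by decide) (by decide)
    (by decide) (by decide) (by decide) (by decide)))) pE0D3'

/-- `x₁ y₁ - x₃ y₃` -/
lemma rbin2 : vE1 * vD1 - vE3 * vD3 ∈ reIdeal ℚ (Iset 3) := by
  have h : vE1 * vD1 - vE3 * vD3 =
      vD1 * relEsum ℚ (Iset 3) - vD3 * relEsum ℚ (Iset 3)
      - vE2 * vD1 - vE3 * vD1 + vE1 * vD3 + vE2 * vD3
      + vE0 * relE ℚ (Iset 3) 2 1 3 + vE0 * vD2' := by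
    rw [relEsum_eval, relE213]; ring
  rw [h]
  refine add_mem (add_mem (add_mem (add_mem (sub_mem (sub_mem (sub_mem
    (Ideal.mul_mem_left _ _ rmem4) (Ideal.mul_mem_left _ _ rmem4)) pED21) pED31)
    pED13) pED23) (Ideal.mul_mem_left _ _ (rmem5 2 1 3 (by decide) (by decide)
    (by decide) (by decide) (by decide) (by decide)))) pE0D2'

end S19
namespace S19

/-! #### `ψ` maps `tgtI19` into the ideal `I_{0,[3]}` -/

lemma psi_ideal : ∀ a ∈ tgtI19, ψ a ∈ reIdeal ℚ (Iset 3) := by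
  have hle : tgtI19 ≤ Ideal.comap ψ.toRingHom (reIdeal ℚ (Iset 3)) := by
    rw [tgtI19, Ideal.span_le]
    rintro x hx
    simp only [Set.mem_union, Set.mem_setOf_eq, Set.mem_insert_iff,
      Set.mem_singleton_iff] at hx
    simp only [SetLike.mem_coe, Ideal.mem_comap, AlgHom.toRingHom_eq_coe,
      RingHom.coe_coe]
    rcases hx with (((⟨i, j, hi, hj, rfl⟩ | ⟨i, j, hi, hj, rfl⟩) |
      ⟨i, j, hi, hj, hij, rfl⟩) | (rfl | rfl))
    · fin_cases i <;> fin_cases j <;>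
        first
          | exact absurd hi (by decide)
          | exact absurd hj (by decide)
          | (rw [map_mul]
             simp only [ψ, gψ, aeval_X]
             first
               | exact pE11 | exact pE12 | exact pE13 | exact pE21 | exact pE22
               | exact pE23 | exact pE31 | exact pE32 | exact pE33)
    · fin_cases i <;> fin_cases j <;>
        first
          | exact absurd hi (by decide)
          | exact absurd hj (by decide)
          | (rw [map_mul]
             simp only [ψ, gψ, aeval_X]
             first
               | exact pD11 | exact pD12 | exact pD13 | exact pD21 | exact pD22
               | exact pD23 | exact pD31 | exact pD32 | exact pD33)
    · fin_cases i <;> fin_cases j <;>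
        first
          | exact absurd hi (by decide)
          | exact absurd hj (by decide)
          | exact absurd hij (by decide)
          | (rw [map_mul]
             simp only [ψ, gψ, aeval_X]
             first
               | exact pED12 | exact pED13 | exact pED21 | exact pED23
               | exact pED31 | exact pED32)
    · rw [map_sub, map_mul, map_mul]
      simp only [ψ0, ψ1, ψ3, ψ4]
      exact rbin1
    · rw [map_sub, map_mul, map_mul]
      simp only [ψ0, ψ2, ψ3, ψ5]
      exact rbin2
  intro a ha
  exact hle ha

end S19
namespace S19

/-! #### The induced maps on quotients -/

def φq : (RRing ℚ (Iset 3) ⧸ reIdeal ℚ (Iset 3)) →ₐ[ℚ] (MvPolynomial (Fin 6) ℚ ⧸ tgtI19) :=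
  Ideal.Quotient.liftₐ _ ((Ideal.Quotient.mkₐ ℚ tgtI19).comp φ)
    (fun a ha => by
      simp only [AlgHom.comp_apply, Ideal.Quotient.mkₐ_eq_mk]
      rw [Ideal.Quotient.eq_zero_iff_mem]
      exact phi_ideal a ha)

def ψq : (MvPolynomial (Fin 6) ℚ ⧸ tgtI19) →ₐ[ℚ] (RRing ℚ (Iset 3) ⧸ reIdeal ℚ (Iset 3)) :=
  Ideal.Quotient.liftₐ _ ((Ideal.Quotient.mkₐ ℚ (reIdeal ℚ (Iset 3))).comp ψ)
    (fun a ha => by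
      simp only [AlgHom.comp_apply, Ideal.Quotient.mkₐ_eq_mk]
      rw [Ideal.Quotient.eq_zero_iff_mem]
      exact psi_ideal a ha)

lemma φq_mk (x : RRing ℚ (Iset 3)) :
    φq (Ideal.Quotient.mk (reIdeal ℚ (Iset 3)) x) = Ideal.Quotient.mk tgtI19 (φ x) := rfl

lemma ψq_mk (x : MvPolynomial (Fin 6) ℚ) :
    ψq (Ideal.Quotient.mk tgtI19 x) = Ideal.Quotient.mk (reIdeal ℚ (Iset 3)) (ψ x) := rfl

lemma comp1 : φq.comp ψq = AlgHom.id ℚ (MvPolynomial (Fin 6) ℚ ⧸ tgtI19) := by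
  refine Ideal.Quotient.algHom_ext ℚ (MvPolynomial.algHom_ext fun i => ?_)
  fin_cases i <;>
    simp only [AlgHom.comp_apply, AlgHom.id_apply, Ideal.Quotient.mkₐ_eq_mk, ψq_mk, φq_mk] <;>
    simp only [ψ, gψ, aeval_X] <;>
    simp only [φv1, φv2, φv3, φw1, φw2, φw3] <;> rfl

lemma roundE (J : Finset ℕ) (h : J ⊆ Iset 3 ∧ J.min = (Iset 3).min) :
    Ideal.Quotient.mk (reIdeal ℚ (Iset 3)) (ψ (φ (X (Sum.inl ⟨J, h⟩)))) =
    Ideal.Quotient.mk (reIdeal ℚ (Iset 3)) (X (Sum.inl ⟨J, h⟩)) := by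
  have h8 : J ∈ ({∅,{1},{2},{3},{1,2},{1,3},{2,3},{1,2,3}} : Finset (Finset ℕ)) := by
    rw [show ({∅,{1},{2},{3},{1,2},{1,3},{2,3},{1,2,3}} : Finset (Finset ℕ)) =
      (Iset 3).powerset from by decide]
    exact Finset.mem_powerset.mpr h.1
  fin_cases h8
  · exact absurd h.2 (by decide)
  · rw [show X (Sum.inl (⟨{1}, h⟩ : EIdx (Iset 3))) = vE1 from rfl, φv1, ψ0]
  · exact absurd h.2 (by decide)
  · exact absurd h.2 (by decide)
  · rw [show X (Sum.inl (⟨{1,2}, h⟩ : EIdx (Iset 3))) = vE3 from rfl, φv3, ψ2]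
  · rw [show X (Sum.inl (⟨{1,3}, h⟩ : EIdx (Iset 3))) = vE2 from rfl, φv2, ψ1]
  · exact absurd h.2 (by decide)
  · rw [show X (Sum.inl (⟨{1,2,3}, h⟩ : EIdx (Iset 3))) = vE0 from rfl, φv0,
      Ideal.Quotient.eq]
    have h2 : ψ (-(X 0 + X 1 + X 2)) - vE0 = -(relEsum ℚ (Iset 3)) := by
      simp only [map_neg, map_add, ψ0, ψ1, ψ2]
      rw [relEsum_eval]; ring
    rw [h2]
    exact neg_mem rmem4

lemma roundD (I J : Finset ℕ)
    (h : I ⊆ Iset 3 ∧ J ⊆ Iset 3 \ I ∧ 1 ≤ I.card ∧ 2 ≤ (Iset 3 \ I).card ∧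
      J.min = (Iset 3 \ I).min) :
    Ideal.Quotient.mk (reIdeal ℚ (Iset 3)) (ψ (φ (X (Sum.inr ⟨(I, J), h⟩)))) =
    Ideal.Quotient.mk (reIdeal ℚ (Iset 3)) (X (Sum.inr ⟨(I, J), h⟩)) := by
  have h8 : I ∈ ({∅,{1},{2},{3},{1,2},{1,3},{2,3},{1,2,3}} : Finset (Finset ℕ)) := by
    rw [show ({∅,{1},{2},{3},{1,2},{1,3},{2,3},{1,2,3}} : Finset (Finset ℕ)) =
      (Iset 3).powerset from by decide]
    exact Finset.mem_powerset.mpr h.1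
  fin_cases h8
  · exact absurd h.2.2.1 (by decide)
  · -- I = {1}
    have h4 : J ∈ ({∅,{2},{3},{2,3}} : Finset (Finset ℕ)) := by
      rw [show ({∅,{2},{3},{2,3}} : Finset (Finset ℕ)) = (Iset 3 \ {1}).powerset from by decide]
      exact Finset.mem_powerset.mpr h.2.1
    fin_cases h4
    · exact absurd h.2.2.2.2 (by decide)
    · rw [show X (Sum.inr (⟨({1}, {2}), h⟩ : DIdx (Iset 3))) = vD1' from rfl, φw1',
        Ideal.Quotient.eq]
      have h2 : ψ (X 5 - X 4) - vD1' = relE ℚ (Iset 3) 1 2 3 := by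
        simp only [map_sub, ψ5, ψ4]; rw [relE123]
      rw [h2]
      exact rmem5 1 2 3 (by decide) (by decide) (by decide) (by decide) (by decide) (by decide)
    · exact absurd h.2.2.2.2 (by decide)
    · rw [show X (Sum.inr (⟨({1}, {2,3}), h⟩ : DIdx (Iset 3))) = vD1 from rfl, φw1, ψ3]
  · -- I = {2}
    have h4 : J ∈ ({∅,{1},{3},{1,3}} : Finset (Finset ℕ)) := by
      rw [show ({∅,{1},{3},{1,3}} : Finset (Finset ℕ)) = (Iset 3 \ {2}).powerset from by decide]
      exact Finset.mem_powerset.mpr h.2.1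
    fin_cases h4
    · exact absurd h.2.2.2.2 (by decide)
    · rw [show X (Sum.inr (⟨({2}, {1}), h⟩ : DIdx (Iset 3))) = vD2' from rfl, φw2',
        Ideal.Quotient.eq]
      have h2 : ψ (X 5 - X 3) - vD2' = relE ℚ (Iset 3) 2 1 3 := by
        simp only [map_sub, ψ5, ψ3]; rw [relE213]
      rw [h2]
      exact rmem5 2 1 3 (by decide) (by decide) (by decide) (by decide) (by decide) (by decide)
    · exact absurd h.2.2.2.2 (by decide)
    · rw [show X (Sum.inr (⟨({2}, {1,3}), h⟩ : DIdx (Iset 3))) = vD2 from rfl, φw2, ψ4]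
  · -- I = {3}
    have h4 : J ∈ ({∅,{1},{2},{1,2}} : Finset (Finset ℕ)) := by
      rw [show ({∅,{1},{2},{1,2}} : Finset (Finset ℕ)) = (Iset 3 \ {3}).powerset from by decide]
      exact Finset.mem_powerset.mpr h.2.1
    fin_cases h4
    · exact absurd h.2.2.2.2 (by decide)
    · rw [show X (Sum.inr (⟨({3}, {1}), h⟩ : DIdx (Iset 3))) = vD3' from rfl, φw3',
        Ideal.Quotient.eq]
      have h2 : ψ (X 4 - X 3) - vD3' = relE ℚ (Iset 3) 3 1 2 := by
        simp only [map_sub, ψ4, ψ3]; rw [relE312]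
      rw [h2]
      exact rmem5 3 1 2 (by decide) (by decide) (by decide) (by decide) (by decide) (by decide)
    · exact absurd h.2.2.2.2 (by decide)
    · rw [show X (Sum.inr (⟨({3}, {1,2}), h⟩ : DIdx (Iset 3))) = vD3 from rfl, φw3, ψ5]
  · exact absurd h.2.2.2.1 (by decide)
  · exact absurd h.2.2.2.1 (by decide)
  · exact absurd h.2.2.2.1 (by decide)
  · exact absurd h.2.2.2.1 (by decide)

lemma comp2 : ψq.comp φq = AlgHom.id ℚ (RRing ℚ (Iset 3) ⧸ reIdeal ℚ (Iset 3)) := by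
  refine Ideal.Quotient.algHom_ext ℚ (MvPolynomial.algHom_ext fun v => ?_)
  simp only [AlgHom.comp_apply, AlgHom.id_apply, Ideal.Quotient.mkₐ_eq_mk, φq_mk, ψq_mk]
  rcases v with e | d
  · obtain ⟨J, h⟩ := e
    exact roundE J h
  · obtain ⟨⟨I, J⟩, h⟩ := d
    exact roundD I J h

end S19
/-- `R_{0,[3]}/I_{0,[3]} ≅ ℚ[x₁,x₂,x₃,y₁,y₂,y₃]/I` via an isomorphism sending
the classes of `ℝE_{{i},…}` and `ℝD_{{i};…,∅}` to the classes of `xᵢ` and `yᵢ`. -/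
theorem stmt19 :
    ∃ e : (RRing ℚ (Iset 3) ⧸ reIdeal ℚ (Iset 3)) ≃ₐ[ℚ]
        (MvPolynomial (Fin 6) ℚ ⧸ tgtI19),
      e (Ideal.Quotient.mk (reIdeal ℚ (Iset 3)) (reE ℚ (Iset 3) {1} {2, 3})) =
          Ideal.Quotient.mk tgtI19 (X 0) ∧
      e (Ideal.Quotient.mk (reIdeal ℚ (Iset 3)) (reE ℚ (Iset 3) {2} {1, 3})) =
          Ideal.Quotient.mk tgtI19 (X 1) ∧
      e (Ideal.Quotient.mk (reIdeal ℚ (Iset 3)) (reE ℚ (Iset 3) {3} {1, 2})) =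
          Ideal.Quotient.mk tgtI19 (X 2) ∧
      e (Ideal.Quotient.mk (reIdeal ℚ (Iset 3)) (reD ℚ (Iset 3) {1} {2, 3} ∅)) =
          Ideal.Quotient.mk tgtI19 (X 3) ∧
      e (Ideal.Quotient.mk (reIdeal ℚ (Iset 3)) (reD ℚ (Iset 3) {2} {1, 3} ∅)) =
          Ideal.Quotient.mk tgtI19 (X 4) ∧
      e (Ideal.Quotient.mk (reIdeal ℚ (Iset 3)) (reD ℚ (Iset 3) {3} {1, 2} ∅)) =
          Ideal.Quotient.mk tgtI19 (X 5) := by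
  refine ⟨AlgEquiv.ofAlgHom S19.φq S19.ψq S19.comp1 S19.comp2, ?_, ?_, ?_, ?_, ?_, ?_⟩
  · rw [S19.eE_1]
    show S19.φq (Ideal.Quotient.mk _ _) = _
    rw [S19.φq_mk, S19.φv1]
  · rw [S19.eE_2]
    show S19.φq (Ideal.Quotient.mk _ _) = _
    rw [S19.φq_mk, S19.φv2]
  · rw [S19.eE_3]
    show S19.φq (Ideal.Quotient.mk _ _) = _
    rw [S19.φq_mk, S19.φv3]
  · rw [S19.eD1a]
    show S19.φq (Ideal.Quotient.mk _ _) = _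
    rw [S19.φq_mk, S19.φw1]
  · rw [S19.eD2a]
    show S19.φq (Ideal.Quotient.mk _ _) = _
    rw [S19.φq_mk, S19.φw2]
  · rw [S19.eD3a]
    show S19.φq (Ideal.Quotient.mk _ _) = _
    rw [S19.φq_mk, S19.φw3]

end
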